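/- Let L be a finite meet-semilattice and G a building set of L, enumerated as G = {G₁,…,G_t} in a linear extension compatible order, i.e., G_i > G_j implies i < j. Let Bl_k L denote the iterated combinatorial blowup Bl_{G_k}(Bl_{G_{k-1}}(… Bl_{G₁} L)) for 1 ≤ k ≤ t (at each step blowing up the element corresponding to G_k in the current semilattice). Then the final semilattice Bl_t L is order-isomorphic to the face poset of the simplicial complex N(G) of nested sets, i.e., to the set of all nested subsets of G (including the empty set) ordered by inclusion. -/

import Mathlib

attribute [local instance] Classical.propDecidable

universe u

/-- The set of maximal elements of `G` below `x`. -/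
def maxBelow {L : Type u} [PartialOrder L] (G : Set L) (x : L) : Set L :=
  {g | g ∈ G ∧ g ≤ x ∧ ∀ h ∈ G, h ≤ x → g ≤ h → h = g}

/-- The tuple in the product of lower intervals which is `g` in the coordinate
indexed by `g` and bottom elsewhere. -/
noncomputable def deltaTuple {L : Type u} [PartialOrder L] [OrderBot L] (G : Set L) (x : L)
    (g : maxBelow G x) : (h : maxBelow G x) → Set.Iic (h : L) :=
  fun h => if (h : L) = (g : L) then ⟨(h : L), le_refl _⟩ else ⟨⊥, bot_le⟩

/-- `G` is a (combinatorial) building set: `G` avoids the bottom element, and for every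
`x ≠ ⊥` the interval `[⊥, x]` decomposes as the product of the intervals below the maximal
elements of `G` below `x`, via an isomorphism sending delta tuples to the corresponding
maximal elements. -/
def IsBuilding {L : Type u} [PartialOrder L] [OrderBot L] (G : Set L) : Prop :=
  (∀ g ∈ G, g ≠ ⊥) ∧
  ∀ x : L, x ≠ ⊥ →
    ∃ φ : ((h : maxBelow G x) → Set.Iic (h : L)) ≃o Set.Iic x,
      ∀ g : maxBelow G x, ((φ (deltaTuple G x g) : Set.Iic x) : L) = (g : L)

/-- A subset `N` of a building set `G` is nested if for every finite set of at least two
pairwise incomparable elements of `N`, the join exists and does not belong to `G`. -/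
def IsNested {L : Type u} [PartialOrder L] (G N : Set L) : Prop :=
  N ⊆ G ∧ ∀ T : Finset L, ↑T ⊆ N → 2 ≤ T.card →
    (∀ a ∈ T, ∀ b ∈ T, a ≠ b → ¬ a ≤ b) →
    ∃ j : L, IsLUB (↑T : Set L) j ∧ j ∉ G

/-- The combinatorial blowup of `L` at `α`: elements are either `y ∈ L` with `y ≱ α`
(encoded `(false, y)`), or symbols `[α, y]` for `y ≱ α` such that `y ∨ α` exists in `L`
(encoded `(true, y)`); the order is induced by the product order on `Bool × L`. -/
def Blowup (L : Type u) [PartialOrder L] (α : L) : Type u :=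
  {p : Bool × L // ¬ α ≤ p.2 ∧ (p.1 = true → ∃ j : L, IsLUB {α, p.2} j)}

noncomputable instance blowupPartialOrder {L : Type u} [PartialOrder L] (α : L) :
    PartialOrder (Blowup L α) :=
  inferInstanceAs (PartialOrder
    {p : Bool × L // ¬ α ≤ p.2 ∧ (p.1 = true → ∃ j : L, IsLUB {α, p.2} j)})

/-- The element of the blowup corresponding to `y ∈ L`, `y ≱ α`. -/
def Blowup.mk1 {L : Type u} [PartialOrder L] {α : L} (y : L) (hy : ¬ α ≤ y) : Blowup L α :=
  ⟨(false, y), hy, fun hb => Bool.noConfusion hb⟩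

/-- The element `[α, y]` of the blowup, for `y ≱ α` such that `y ∨ α` exists. -/
def Blowup.mk2 {L : Type u} [PartialOrder L] {α : L} (y : L) (hy : ¬ α ≤ y)
    (hj : ∃ j : L, IsLUB {α, y} j) : Blowup L α :=
  ⟨(true, y), hy, fun _ => hj⟩

/-- A poset together with a partially defined map from `L`, tracking the copies of the
elements of `L` through iterated blowups. -/
structure BlowupState (L : Type u) where
  carrier : Type u
  order : PartialOrder carrier
  emb : L → Option carrier

/-- The initial state: `L` itself, with every element tracked by itself. -/
def initState (L : Type u) [PartialOrder L] : BlowupState L where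
  carrier := L
  order := inferInstance
  emb := fun y => some y

/-- One step: blow up the current poset at the element corresponding to `g` (if it is
still tracked), and update the tracking map: `y` survives as the copy `(false, y)`
whenever that is an element of the blowup. -/
noncomputable def blowupStep {L : Type u} (S : BlowupState L) (g : L) : BlowupState L :=
  match S.emb g with
  | none => S
  | some a =>
    letI := S.order
    { carrier := Blowup S.carrier a
      order := blowupPartialOrder a
      emb := fun y =>
        match S.emb y with
        | none => none
        | some b =>
          if h : ¬ a ≤ b then some (Blowup.mk1 b h) else none }

/-- The iterated combinatorial blowup along a list of elements of `L`. -/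
noncomputable def iterBlowup (L : Type u) [PartialOrder L] (l : List L) : BlowupState L :=
  l.foldl blowupStep (initState L)

section Aux
set_option linter.unusedSectionVars false
set_option linter.unusedVariables false

variable {L : Type u} [SemilatticeInf L] [Fintype L] [OrderBot L] {G : Set L}

/-- In a finite meet-semilattice with bottom, any set with an upper bound has a LUB. -/
lemma exists_isLUB_of_ub {s : Set L} {z : L} (hz : z ∈ upperBounds s) : ∃ j, IsLUB s j := by
  classical
  have hzU : z ∈ Finset.univ.filter (· ∈ upperBounds s) := by
    simp [hz]
  refine ⟨(Finset.univ.filter (· ∈ upperBounds s)).inf' ⟨z, hzU⟩ id, ?_, ?_⟩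
  · intro a ha
    apply Finset.le_inf'
    intro u hu
    simp only [Finset.mem_filter] at hu
    exact hu.2 ha
  · intro u hu
    have : u ∈ Finset.univ.filter (· ∈ upperBounds s) := by simp [hu]
    exact Finset.inf'_le id this

lemma exists_maximal_above {s : Set L} {a : L} (ha : a ∈ s) :
    ∃ m ∈ s, a ≤ m ∧ ∀ b ∈ s, m ≤ b → b = m := by
  obtain ⟨m, hm, hmax⟩ := Set.Finite.exists_maximalFor id {b ∈ s | a ≤ b}
    (Set.toFinite _) ⟨a, ha, le_refl a⟩
  exact ⟨m, hm.1, hm.2, fun b hb hmb => le_antisymm (hmax ⟨hb, le_trans hm.2 hmb⟩ hmb) hmb⟩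

lemma exists_maxBelow_above {g x : L} (hg : g ∈ G) (hgx : g ≤ x) :
    ∃ m ∈ maxBelow G x, g ≤ m := by
  obtain ⟨m, hm, ham, hmax⟩ := exists_maximal_above (s := {h | h ∈ G ∧ h ≤ x}) ⟨hg, hgx⟩
  exact ⟨m, ⟨hm.1, hm.2, fun h hh hhx hmh => hmax h ⟨hh, hhx⟩ hmh⟩, ham⟩

lemma maxBelow_subset {x : L} : maxBelow G x ⊆ G := fun _ hm => hm.1

lemma maxBelow_le {x m : L} (hm : m ∈ maxBelow G x) : m ≤ x := hm.2.1

lemma maxBelow_incomp {x m m' : L} (hm : m ∈ maxBelow G x) (hm' : m' ∈ maxBelow G x)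
    (h : m ≤ m') : m' = m :=
  hm.2.2 m' hm'.1 hm'.2.1 h

lemma maxBelow_bot (hG : ∀ g ∈ G, g ≠ ⊥) : maxBelow G ⊥ = ∅ := by
  ext m
  simp only [maxBelow, Set.mem_setOf_eq, Set.mem_empty_iff_false, iff_false]
  rintro ⟨hmG, hmb, -⟩
  exact hG m hmG (le_bot_iff.1 hmb)

lemma maxBelow_self {g : L} (hg : g ∈ G) : maxBelow G g = {g} := by
  ext m
  simp only [Set.mem_singleton_iff]
  constructor
  · rintro ⟨hmG, hmg, hmax⟩
    exact (hmax g hg (le_refl g) hmg).symm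
  · intro hmg
    subst hmg
    exact ⟨hg, le_refl m, fun h hh hhg hgh => le_antisymm hhg hgh⟩

lemma nested_mono {A B : Set L} (hB : IsNested G B) (hAB : A ⊆ B) : IsNested G A :=
  ⟨fun a ha => hB.1 (hAB ha), fun T hT => hB.2 T (fun t ht => hAB (hT ht))⟩

section Building

variable (hG : IsBuilding G)
include hG

lemma maxBelow_nonempty {x : L} (hx : x ≠ ⊥) : (maxBelow G x).Nonempty := by
  by_contra hne
  rw [Set.not_nonempty_iff_eq_empty] at hne
  obtain ⟨φ, -⟩ := hG.2 x hx
  have : (⟨x, le_refl x⟩ : Set.Iic x) = ⟨⊥, bot_le⟩ := by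
    have h1 : φ.symm ⟨x, le_refl x⟩ = φ.symm ⟨⊥, bot_le⟩ := by
      funext h
      exact absurd (hne ▸ h.2 : (h : L) ∈ (∅ : Set L)) (Set.notMem_empty _)
    have := congrArg φ h1
    simpa using this
  exact hx (congrArg Subtype.val this)

lemma eq_bot_of_no_maxBelow {x : L} (h : ∀ g ∈ G, ¬ g ≤ x) : x = ⊥ := by
  by_contra hx
  obtain ⟨m, hm⟩ := maxBelow_nonempty hG hx
  exact h m hm.1 hm.2.1

end Building

end Aux
section Aux2
set_option linter.unusedSectionVars false
set_option linter.unusedVariables false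

variable {L : Type u} [SemilatticeInf L] [Fintype L] [OrderBot L] {G : Set L}

lemma isLUB_image_of_iff {A B : Type*} [Preorder A] [Preorder B] {f : A → B}
    (hf : ∀ a b : A, a ≤ b ↔ f a ≤ f b) (hsurj : Function.Surjective f) {s : Set A} {j : A}
    (h : IsLUB s j) : IsLUB (f '' s) (f j) := by
  constructor
  · rintro _ ⟨a, ha, rfl⟩
    exact (hf a j).1 (h.1 ha)
  · intro b hb
    obtain ⟨a0, rfl⟩ := hsurj b
    refine (hf j a0).1 (h.2 ?_)
    intro a ha
    exact (hf a a0).2 (hb (Set.mem_image_of_mem f ha))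

lemma isLUB_Iic_iff {w : L} {s : Set (Set.Iic w)} {j : Set.Iic w} :
    IsLUB s j ↔ IsLUB (Subtype.val '' s) (j : L) := by
  constructor
  · intro h
    constructor
    · rintro _ ⟨a, ha, rfl⟩
      exact h.1 ha
    · intro z hz
      have hj : j ≤ ⟨(j : L) ⊓ w ⊓ z, le_trans inf_le_left inf_le_right⟩ := by
        apply h.2
        intro a ha
        have haz : (a : L) ≤ z := hz (Set.mem_image_of_mem _ ha)
        exact Subtype.mk_le_mk.2 (le_inf (le_inf (h.1 ha) a.2) haz)
      exact le_trans hj inf_le_right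
  · intro h
    constructor
    · intro a ha
      exact Subtype.coe_le_coe.1 (h.1 (Set.mem_image_of_mem _ ha))
    · intro b hb
      refine Subtype.coe_le_coe.1 (h.2 ?_)
      rintro _ ⟨a, ha, rfl⟩
      exact Subtype.coe_le_coe.2 (hb ha)

section Building

variable (hG : IsBuilding G)

section Phi

variable {x : L}

lemma phi_top (φ : ((h : maxBelow G x) → Set.Iic (h : L)) ≃o Set.Iic x) :
    φ (fun h : ↥(maxBelow G x) => (⟨(h : L), le_refl _⟩ : Set.Iic (h : L))) = ⟨x, le_refl x⟩ := by
  apply le_antisymm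
  · exact Subtype.mk_le_mk.2 (φ _).2
  · have h1 : φ.symm ⟨x, le_refl x⟩ ≤ fun h : ↥(maxBelow G x) => (⟨(h : L), le_refl _⟩ : Set.Iic (h : L)) := by
      intro h
      exact Subtype.mk_le_mk.2 (φ.symm _ h).2
    have := φ.monotone h1
    rwa [OrderIso.apply_symm_apply] at this

lemma phi_symm_support (φ : ((h : maxBelow G x) → Set.Iic (h : L)) ≃o Set.Iic x)
    (hφ : ∀ g : maxBelow G x, ((φ (deltaTuple G x g) : Set.Iic x) : L) = (g : L))
    {z : Set.Iic x} {m : maxBelow G x} (hzm : (z : L) ≤ (m : L)) :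
    ∀ h : maxBelow G x, h ≠ m → φ.symm z h = ⟨⊥, bot_le⟩ := by
  intro h hh
  have h1 : z ≤ φ (deltaTuple G x m) := by
    rw [← Subtype.coe_le_coe, hφ m]
    exact hzm
  have h2 : φ.symm z ≤ deltaTuple G x m := by
    have := φ.symm.monotone h1
    rwa [OrderIso.symm_apply_apply] at this
  have h3 := h2 h
  rw [deltaTuple, if_neg (fun hv => hh (Subtype.ext hv))] at h3
  exact le_antisymm h3 (Subtype.mk_le_mk.2 bot_le)

lemma phi_bot (φ : ((h : maxBelow G x) → Set.Iic (h : L)) ≃o Set.Iic x) :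
    φ (fun h : ↥(maxBelow G x) => (⟨⊥, bot_le⟩ : Set.Iic (h : L))) = ⟨⊥, bot_le⟩ := by
  apply le_antisymm
  · have h1 : (fun h : ↥(maxBelow G x) => (⟨⊥, bot_le⟩ : Set.Iic (h : L))) ≤ φ.symm ⟨⊥, bot_le⟩ := by
      intro h
      exact Subtype.mk_le_mk.2 bot_le
    have := φ.monotone h1
    rwa [OrderIso.apply_symm_apply] at this
  · exact Subtype.mk_le_mk.2 bot_le

end Phi

include hG

lemma isLUB_maxBelow (x : L) : IsLUB (maxBelow G x) x := by
  by_cases hx : x = ⊥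
  · subst hx
    rw [maxBelow_bot hG.1]
    exact isLUB_empty
  obtain ⟨φ, hφ⟩ := hG.2 x hx
  constructor
  · intro m hm
    exact hm.2.1
  · intro z hz
    have hkey : φ.symm ⟨x ⊓ z, inf_le_left⟩ = fun h => ⟨(h : L), le_refl _⟩ := by
      apply le_antisymm
      · intro h
        exact Subtype.mk_le_mk.2 (φ.symm _ h).2
      · intro h
        have hd : deltaTuple G x h ≤ φ.symm ⟨x ⊓ z, inf_le_left⟩ := by
          have h1 : φ (deltaTuple G x h) ≤ ⟨x ⊓ z, inf_le_left⟩ := by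
            rw [← Subtype.coe_le_coe, hφ h]
            exact le_inf h.2.2.1 (hz h.2)
          have := φ.symm.monotone h1
          rwa [OrderIso.symm_apply_apply] at this
        have h2 := hd h
        rw [deltaTuple, if_pos rfl] at h2
        exact h2
    have := congrArg φ hkey
    rw [OrderIso.apply_symm_apply, phi_top φ] at this
    have hxz : x ⊓ z = x := congrArg Subtype.val this
    rw [← hxz]
    exact inf_le_right

lemma nested_maxBelow (x : L) : IsNested G (maxBelow G x) := by
  refine ⟨maxBelow_subset, ?_⟩
  intro T hT hcard hinc
  have hub : x ∈ upperBounds (↑T : Set L) := fun t ht => (hT ht).2.1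
  obtain ⟨s, hs⟩ := exists_isLUB_of_ub hub
  refine ⟨s, hs, fun hsG => ?_⟩
  obtain ⟨t1, ht1⟩ := (Finset.card_pos (s := T)).1 (by omega)
  obtain ⟨t2, ht2, ht21⟩ := Finset.exists_mem_ne (s := T) (by omega) t1
  have hst1 : t1 ≤ s := hs.1 (Finset.mem_coe.2 ht1)
  have hsx : s ≤ x := hs.2 hub
  have hne : s ≠ t1 := by
    intro h
    exact hinc t2 ht2 t1 ht1 ht21 (h ▸ hs.1 (Finset.mem_coe.2 ht2))
  exact hne ((hT (Finset.mem_coe.2 ht1)).2.2 s hsG hsx hst1)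

lemma decomp {T : Finset L} (hTG : ↑T ⊆ G)
    (hne : T.Nonempty) (hinc : ∀ a ∈ T, ∀ b ∈ T, a ≠ b → ¬ a ≤ b)
    (hjoins : ∀ S : Finset L, S ⊆ T → 2 ≤ S.card → ∃ j, IsLUB (↑S : Set L) j ∧ j ∉ G)
    {w : L} (hw : IsLUB (↑T : Set L) w) : maxBelow G w = ↑T := by
  classical
  by_cases hcard : 2 ≤ T.card
  swap
  · obtain ⟨t, rfl⟩ : ∃ t, T = {t} :=
      Finset.card_eq_one.1 (le_antisymm (by omega) hne.card_pos)
    have hwt : w = t := hw.unique (by simpa using isLUB_singleton)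
    rw [hwt, maxBelow_self (hTG (Finset.mem_coe.2 (Finset.mem_singleton_self t)))]
    simp
  have hwG : w ∉ G := by
    obtain ⟨j, hj, hjG⟩ := hjoins T le_rfl hcard
    rwa [hw.unique hj]
  obtain ⟨t0, ht0⟩ := hne
  have hwbot : w ≠ ⊥ := by
    intro h
    apply hG.1 t0 (hTG (Finset.mem_coe.2 ht0))
    have := hw.1 (Finset.mem_coe.2 ht0)
    rw [h] at this
    exact le_bot_iff.1 this
  obtain ⟨φ, hφ⟩ := hG.2 w hwbot
  have hcov : ∀ t ∈ T, ∃ m ∈ maxBelow G w, t ≤ m := fun t ht =>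
    exists_maxBelow_above (hTG (Finset.mem_coe.2 ht)) (hw.1 (Finset.mem_coe.2 ht))
  have hsub : maxBelow G w ⊆ ↑T := by
    intro m hm
    set mI : ↥(maxBelow G w) := ⟨m, hm⟩ with hmI
    set botf : (h : ↥(maxBelow G w)) → Set.Iic (h : L) := fun h => ⟨⊥, bot_le⟩ with hbotf
    set Tm : Finset L := T.filter (· ≤ m) with hTm
    -- the interval automorphism J
    have hJb : ∀ y : Set.Iic (m : L), (φ (Function.update botf mI y) : L) ≤ m := by
      intro y
      have h1 : Function.update botf mI y ≤ Function.update botf mI ⟨m, le_refl m⟩ := by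
        intro h
        by_cases hh : h = mI
        · subst hh
          simp only [Function.update_self]
          exact Subtype.mk_le_mk.2 y.2
        · simp only [Function.update_of_ne hh]
          exact le_refl _
      have hupdtop : Function.update botf mI ⟨m, le_refl m⟩ = deltaTuple G w mI := by
        funext h
        by_cases hh : h = mI
        · subst hh
          simp [Function.update_self, deltaTuple]
          rfl
        · simp only [Function.update_of_ne hh, deltaTuple]
          rw [if_neg (fun hv => hh (Subtype.ext hv))]
      have := φ.monotone h1
      rw [hupdtop] at this
      calc (φ (Function.update botf mI y) : L) ≤ (φ (deltaTuple G w mI) : L) := this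
        _ = m := hφ mI
    set J : Set.Iic (m : L) → Set.Iic (m : L) := fun y => ⟨(φ (Function.update botf mI y) : L), hJb y⟩ with hJ
    have hJ_iff : ∀ y y' : Set.Iic (m : L), y ≤ y' ↔ J y ≤ J y' := by
      intro y y'
      constructor
      · intro h
        apply Subtype.mk_le_mk.2
        apply Subtype.coe_le_coe.2
        apply φ.monotone
        intro h'
        by_cases hh : h' = mI
        · subst hh; simpa using h
        · simp [Function.update_of_ne hh]
      · intro h
        have h1 : Function.update botf mI y ≤ Function.update botf mI y' :=
          φ.le_iff_le.1 (Subtype.coe_le_coe.1 h)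
        have := h1 mI
        simpa using this
    have hsupp : ∀ (z : Set.Iic w), (z : L) ≤ m → φ.symm z = Function.update botf mI (φ.symm z mI) := by
      intro z hzm
      funext h
      by_cases hh : h = mI
      · subst hh; simp
      · rw [Function.update_of_ne hh]
        exact phi_symm_support φ hφ hzm h hh
    have hJsurj : Function.Surjective J := by
      intro y
      have hyw : (y : L) ≤ w := le_trans y.2 hm.2.1
      refine ⟨φ.symm ⟨(y : L), hyw⟩ mI, ?_⟩
      apply Subtype.ext
      show (φ (Function.update botf mI (φ.symm ⟨(y : L), hyw⟩ mI)) : L) = (y : L)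
      rw [← hsupp ⟨(y : L), hyw⟩ y.2, OrderIso.apply_symm_apply]
    -- LUB transfer chain
    have h1 : IsLUB {t : Set.Iic w | (t : L) ∈ T} ⟨w, le_refl w⟩ := by
      rw [isLUB_Iic_iff]
      have : Subtype.val '' {t : Set.Iic w | (t : L) ∈ T} = (↑T : Set L) := by
        ext z
        constructor
        · rintro ⟨a, ha, rfl⟩; exact ha
        · intro hz; exact ⟨⟨z, hw.1 hz⟩, hz, rfl⟩
      rw [this]
      exact hw
    have h2 : IsLUB (φ.symm '' {t : Set.Iic w | (t : L) ∈ T}) (φ.symm ⟨w, le_refl w⟩) :=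
      isLUB_image_of_iff (fun a b => (φ.symm.le_iff_le).symm) φ.symm.surjective h1
    have h3 : φ.symm ⟨w, le_refl w⟩ = fun h : ↥(maxBelow G w) => (⟨(h : L), le_refl _⟩ : Set.Iic (h : L)) := by
      rw [OrderIso.symm_apply_eq]
      exact (phi_top φ).symm
    rw [h3] at h2
    have h4 := (isLUB_pi.1 h2) mI
    have h5 := isLUB_image_of_iff hJ_iff hJsurj h4
    have h6 : J (⟨(mI : L), le_refl _⟩) = ⟨m, le_refl m⟩ := by
      apply Subtype.ext
      show (φ (Function.update botf mI ⟨(mI : L), le_refl _⟩) : L) = m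
      have hupdtop : Function.update botf mI ⟨(mI : L), le_refl _⟩ = deltaTuple G w mI := by
        funext h
        by_cases hh : h = mI
        · subst hh
          simp [Function.update_self, deltaTuple]
        · simp only [Function.update_of_ne hh, deltaTuple]
          rw [if_neg (fun hv => hh (Subtype.ext hv))]
      rw [hupdtop]
      exact hφ mI
    rw [h6] at h5
    have h7 : IsLUB (Subtype.val '' (J '' (Function.eval mI '' (φ.symm '' {t : Set.Iic w | (t : L) ∈ T})))) m :=
      isLUB_Iic_iff.1 h5
    -- identify the image set
    have himg_le : ∀ (t : L) (ht : t ∈ T), t ≤ m →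
        (J ((φ.symm ⟨t, hw.1 ht⟩) mI) : L) = t := by
      intro t ht htm
      show (φ (Function.update botf mI (φ.symm ⟨t, hw.1 ht⟩ mI)) : L) = t
      rw [← hsupp ⟨t, hw.1 ht⟩ htm, OrderIso.apply_symm_apply]
    have himg_nle : ∀ (t : L) (ht : t ∈ T), ¬ t ≤ m →
        (J ((φ.symm ⟨t, hw.1 ht⟩) mI) : L) = ⊥ := by
      intro t ht htm
      obtain ⟨m', hm', htm'⟩ := hcov t ht
      have hmm' : mI ≠ (⟨m', hm'⟩ : ↥(maxBelow G w)) := by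
        intro h
        apply htm
        rw [hmI] at h
        have : m = m' := congrArg Subtype.val h
        rw [this]
        exact htm'
      have hz : φ.symm ⟨t, hw.1 ht⟩ mI = ⟨⊥, bot_le⟩ :=
        phi_symm_support φ hφ (htm' : ((⟨t, hw.1 ht⟩ : Set.Iic w) : L) ≤ m') mI hmm'
      rw [hz]
      show (φ (Function.update botf mI ⟨⊥, bot_le⟩) : L) = ⊥
      have hupd : Function.update botf mI (⟨⊥, bot_le⟩ : Set.Iic (m : L)) = botf :=
        Function.update_eq_self mI botf
      rw [hupd, hbotf, phi_bot φ]
    have hS1 : (↑Tm : Set L) ⊆ Subtype.val '' (J '' (Function.eval mI '' (φ.symm '' {t : Set.Iic w | (t : L) ∈ T}))) := by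
      intro t htm
      rw [hTm] at htm
      simp only [Finset.coe_filter, Set.mem_setOf_eq] at htm
      obtain ⟨htT, htle⟩ := htm
      refine ⟨J ((φ.symm ⟨t, hw.1 htT⟩) mI), ?_, himg_le t htT htle⟩
      exact ⟨(φ.symm ⟨t, hw.1 htT⟩) mI, ⟨φ.symm ⟨t, hw.1 htT⟩, ⟨⟨t, hw.1 htT⟩, htT, rfl⟩, rfl⟩, rfl⟩
    have hS2 : Subtype.val '' (J '' (Function.eval mI '' (φ.symm '' {t : Set.Iic w | (t : L) ∈ T}))) ⊆ insert ⊥ (↑Tm : Set L) := by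
      rintro _ ⟨_, ⟨_, ⟨_, ⟨tI, htI, rfl⟩, rfl⟩, rfl⟩, rfl⟩
      by_cases htm : (tI : L) ≤ m
      · right
        have : (⟨(tI : L), hw.1 htI⟩ : Set.Iic w) = tI := Subtype.ext rfl
        rw [← this]
        rw [himg_le (tI : L) htI htm]
        rw [hTm]
        simp only [Finset.coe_filter, Set.mem_setOf_eq]
        exact ⟨htI, htm⟩
      · left
        have : (⟨(tI : L), hw.1 htI⟩ : Set.Iic w) = tI := Subtype.ext rfl
        rw [← this]
        exact himg_nle (tI : L) htI htm
    have hLUBTm : IsLUB (↑Tm : Set L) m := by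
      constructor
      · intro t ht
        exact h7.1 (hS1 ht)
      · intro z hz
        apply h7.2
        intro a ha
        rcases hS2 ha with h | h
        · rw [h]; exact bot_le
        · exact hz h
    -- conclude
    have hTmne : Tm.Nonempty := by
      by_contra hTmne
      rw [Finset.not_nonempty_iff_eq_empty] at hTmne
      rw [hTmne] at hLUBTm
      have : m = ⊥ := hLUBTm.unique (by simpa using isLUB_empty)
      exact hG.1 m hm.1 this
    by_cases hTmcard : 2 ≤ Tm.card
    · obtain ⟨j, hj, hjG⟩ := hjoins Tm (Finset.filter_subset _ _) hTmcard
      exact absurd hm.1 (hj.unique hLUBTm ▸ hjG)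
    · obtain ⟨t, hTmt⟩ : ∃ t, Tm = {t} :=
        Finset.card_eq_one.1 (le_antisymm (by omega) hTmne.card_pos)
      have hmt : m = t := by
        rw [hTmt] at hLUBTm
        exact hLUBTm.unique (by simpa using isLUB_singleton)
      have : t ∈ Tm := hTmt ▸ Finset.mem_singleton_self t
      rw [hTm] at this
      rw [hmt]
      exact Finset.mem_coe.2 (Finset.mem_of_mem_filter t this)
  refine Set.Subset.antisymm hsub ?_
  intro t ht
  obtain ⟨m, hm, htm⟩ := hcov t ht
  have hmT : m ∈ ↑T := hsub hm
  by_cases hne' : t = m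
  · rw [hne']; exact hm
  · exact absurd htm (hinc t ht m hmT hne')
lemma recur_fwd {D : Set L} (hDG : D ⊆ G) {g : L} (hgG : g ∈ G)
    (hcl : ∀ h ∈ G, ∀ d, (d ∈ D ∨ d = g) → d < h → h ∈ D)
    {N : Set L} {x : L} (hN : N ⊆ D) (hxD : ∀ d ∈ D, ¬ d ≤ x)
    (hnx : IsNested G (N ∪ maxBelow G x))
    {Nz : Set L} {z : L} (hNz : Nz ⊆ D) (hNNz : N ⊆ Nz) (hgz : g ≤ z) (hxz : x ≤ z)
    (hzD : ∀ d ∈ D, ¬ d ≤ z) (hnz : IsNested G (Nz ∪ maxBelow G z)) :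
    IsNested G (insert g (N ∪ maxBelow G x)) := by
  classical
  constructor
  · intro a ha
    rcases Set.mem_insert_iff.1 ha with rfl | ha'
    · exact hgG
    · rcases ha' with haN | haM
      · exact hDG (hN haN)
      · exact maxBelow_subset haM
  intro T' hT' hcard hinc
  have hcc : ∀ t : L, ∃ c : L, t ∈ T' →
      ((c ∈ Nz ∪ maxBelow G z) ∧ t ≤ c ∧ (t ∈ N → c = t) ∧ (t ∉ N → c ∈ maxBelow G z)) := by
    intro t
    by_cases ht : t ∈ T'
    · by_cases htN : t ∈ N
      · exact ⟨t, fun _ => ⟨Or.inl (hNNz htN), le_refl t, fun _ => rfl, fun h => absurd htN h⟩⟩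
      · have htG : t ∈ G ∧ t ≤ z := by
          rcases Set.mem_insert_iff.1 (hT' (Finset.mem_coe.2 ht)) with rfl | h'
          · exact ⟨hgG, hgz⟩
          · rcases h' with h' | h'
            · exact absurd h' htN
            · exact ⟨maxBelow_subset h', le_trans (maxBelow_le h') hxz⟩
        obtain ⟨m, hm, htm⟩ := exists_maxBelow_above htG.1 htG.2
        exact ⟨m, fun _ => ⟨Or.inr hm, htm, fun hN' => absurd hN' htN, fun _ => hm⟩⟩
    · exact ⟨t, fun h => absurd h ht⟩
  choose c hc using hcc
  set U : Finset L := T'.image c with hUdef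
  have hUsub : ↑U ⊆ Nz ∪ maxBelow G z := by
    intro u hu
    obtain ⟨t, ht, rfl⟩ := Finset.mem_image.1 (Finset.mem_coe.1 hu)
    exact (hc t ht).1
  set Uc : Finset L := U.filter (fun a => ∀ b ∈ U, a ≤ b → b = a) with hUcdef
  have hUcU : Uc ⊆ U := Finset.filter_subset _ _
  have hUc_cov : ∀ a ∈ U, ∃ m' ∈ Uc, a ≤ m' := by
    intro a ha
    obtain ⟨m', hm'U, ham', hmax⟩ := exists_maximal_above (s := {b : L | b ∈ U}) ha
    exact ⟨m', Finset.mem_filter.2 ⟨hm'U, fun b hb hm'b => hmax b hb hm'b⟩, ham'⟩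
  have hUcsub : ↑Uc ⊆ Nz ∪ maxBelow G z := fun a ha => hUsub (Finset.mem_coe.2 (hUcU (Finset.mem_coe.1 ha)))
  have hUcG : ↑Uc ⊆ G := by
    intro a ha
    rcases hUcsub ha with h | h
    · exact hDG (hNz h)
    · exact maxBelow_subset h
  have hUcinc : ∀ a ∈ Uc, ∀ b ∈ Uc, a ≠ b → ¬ a ≤ b := by
    intro a ha b hb hab hle
    exact hab ((Finset.mem_filter.1 ha).2 b (hUcU hb) hle).symm
  have hUcne : Uc.Nonempty := by
    obtain ⟨t1, ht1⟩ := (Finset.card_pos (s := T')).1 (by omega)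
    obtain ⟨m', hm', -⟩ := hUc_cov (c t1) (Finset.mem_image_of_mem c ht1)
    exact ⟨m', hm'⟩
  have hexu : ∃ u, IsLUB (↑Uc : Set L) u := by
    by_cases h2 : 2 ≤ Uc.card
    · obtain ⟨u, hu, -⟩ := hnz.2 Uc hUcsub h2 hUcinc
      exact ⟨u, hu⟩
    · have hc1 : Uc.card = 1 := by
        have := hUcne.card_pos
        omega
      obtain ⟨a, ha⟩ := Finset.card_eq_one.1 hc1
      exact ⟨a, by rw [ha]; simpa using isLUB_singleton⟩
  obtain ⟨u, hu⟩ := hexu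
  have hmBu : maxBelow G u = ↑Uc :=
    decomp hG hUcG hUcne hUcinc
      (fun S hS h2 => hnz.2 S (fun a ha => hUcsub (Finset.coe_subset.2 hS ha)) h2
        (fun a ha b hb hab => hUcinc a (hS ha) b (hS hb) hab)) hu
  have hub : u ∈ upperBounds (↑T' : Set L) := by
    intro t ht
    obtain ⟨m', hm', hcm'⟩ := hUc_cov (c t) (Finset.mem_image_of_mem c (Finset.mem_coe.1 ht))
    exact le_trans (le_trans (hc t (Finset.mem_coe.1 ht)).2.1 hcm') (hu.1 (Finset.mem_coe.2 hm'))
  obtain ⟨s, hs⟩ := exists_isLUB_of_ub hub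
  refine ⟨s, hs, fun hsG => ?_⟩
  have ht_lt : ∀ t ∈ T', t < s := by
    intro t ht
    refine lt_of_le_of_ne (hs.1 (Finset.mem_coe.2 ht)) ?_
    intro hts
    obtain ⟨t2, ht2, ht21⟩ := Finset.exists_mem_ne (s := T') (by omega) t
    exact hinc t2 ht2 t ht ht21 (hts ▸ hs.1 (Finset.mem_coe.2 ht2))
  have hsu : s ≤ u := hs.2 hub
  obtain ⟨m0, hm0, hsm0⟩ := exists_maxBelow_above hsG hsu
  rw [hmBu] at hm0
  obtain ⟨t0, ht0, hct0⟩ := Finset.mem_image.1 (hUcU (Finset.mem_coe.1 hm0))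
  by_cases ht0N : t0 ∈ N
  · have hm0t0 : m0 = t0 := by rw [← hct0]; exact (hc t0 ht0).2.2.1 ht0N
    have h1 : t0 < s := ht_lt t0 ht0
    have h2 : s ≤ t0 := hm0t0 ▸ hsm0
    exact absurd (lt_of_lt_of_le h1 h2) (lt_irrefl t0)
  · have hm0M : m0 ∈ maxBelow G z := by rw [← hct0]; exact (hc t0 ht0).2.2.2 ht0N
    have hsz : s ≤ z := le_trans hsm0 (maxBelow_le hm0M)
    by_cases hTN : ∃ n ∈ T', n ∈ N
    · obtain ⟨n, hnT, hnN⟩ := hTN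
      exact hzD s (hcl s hsG n (Or.inl (hN hnN)) (ht_lt n hnT)) hsz
    · by_cases hgT : g ∈ T'
      · exact hzD s (hcl s hsG g (Or.inr rfl) (ht_lt g hgT)) hsz
      · have hT'mb : ↑T' ⊆ maxBelow G x := by
          intro t ht
          rcases Set.mem_insert_iff.1 (hT' ht) with rfl | h'
          · exact absurd (Finset.mem_coe.1 ht) hgT
          · rcases h' with h' | h'
            · exact absurd ⟨t, Finset.mem_coe.1 ht, h'⟩ hTN
            · exact h'
        obtain ⟨j, hj, hjG⟩ := (nested_maxBelow hG x).2 T' hT'mb hcard hinc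
        exact hjG ((hj.unique hs).symm ▸ hsG)

lemma recur_bwd {D : Set L} (hDG : D ⊆ G) {g : L} (hgG : g ∈ G)
    (h3 : ∀ d ∈ D, ¬ d ≤ g)
    {N : Set L} {x : L} (hN : N ⊆ D) (hxD : ∀ d ∈ D, ¬ d ≤ x) (hgx : ¬ g ≤ x)
    (hB : IsNested G (insert g (N ∪ maxBelow G x))) :
    ∃ w : L, g ≤ w ∧ x ≤ w ∧ (∀ d ∈ D, ¬ d ≤ w) ∧ IsNested G (N ∪ maxBelow G w) ∧
      ∀ z : L, g ≤ z → x ≤ z → w ≤ z := by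
  classical
  set T : Finset L := insert g ((Set.toFinite (maxBelow G x)).toFinset.filter (fun h => ¬ h ≤ g))
    with hTdef
  have hTmem : ∀ a, a ∈ T ↔ a = g ∨ (a ∈ maxBelow G x ∧ ¬ a ≤ g) := by
    intro a
    simp only [hTdef, Finset.mem_insert, Finset.mem_filter, Set.Finite.mem_toFinset]
  have hTsubB : ↑T ⊆ insert g (N ∪ maxBelow G x) := by
    intro a ha
    rcases (hTmem a).1 (Finset.mem_coe.1 ha) with rfl | ⟨haM, -⟩
    · exact Set.mem_insert _ _
    · exact Set.mem_insert_iff.2 (Or.inr (Or.inr haM))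
  have hTG : ↑T ⊆ G := by
    intro a ha
    rcases (hTmem a).1 (Finset.mem_coe.1 ha) with rfl | ⟨haM, -⟩
    · exact hgG
    · exact maxBelow_subset haM
  have hinc : ∀ a ∈ T, ∀ b ∈ T, a ≠ b → ¬ a ≤ b := by
    intro a ha b hb hab hle
    rcases (hTmem a).1 ha with rfl | ⟨haM, hag⟩
    · rcases (hTmem b).1 hb with rfl | ⟨hbM, hbg⟩
      · exact hab rfl
      · exact hgx (le_trans hle (maxBelow_le hbM))
    · rcases (hTmem b).1 hb with rfl | ⟨hbM, hbg⟩
      · exact hag hle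
      · exact hab (maxBelow_incomp haM hbM hle).symm
  have hjoins : ∀ S : Finset L, S ⊆ T → 2 ≤ S.card → ∃ j, IsLUB (↑S : Set L) j ∧ j ∉ G :=
    fun S hS h2 => hB.2 S (fun t ht => hTsubB (Finset.coe_subset.2 hS ht)) h2
      (fun a ha b hb hab => hinc a (hS ha) b (hS hb) hab)
  have hgTmem : g ∈ T := Finset.mem_insert_self _ _
  have hexw : ∃ w, IsLUB (↑T : Set L) w := by
    by_cases h2 : 2 ≤ T.card
    · obtain ⟨w, hw, -⟩ := hjoins T le_rfl h2
      exact ⟨w, hw⟩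
    · have hc1 : T.card = 1 := by
        have : 0 < T.card := Finset.card_pos.2 ⟨g, hgTmem⟩
        omega
      obtain ⟨a, ha⟩ := Finset.card_eq_one.1 hc1
      exact ⟨a, by rw [ha]; simpa using isLUB_singleton⟩
  obtain ⟨w, hw⟩ := hexw
  have hmBw : maxBelow G w = ↑T := decomp hG hTG ⟨g, hgTmem⟩ hinc hjoins hw
  have hgw : g ≤ w := hw.1 (Finset.mem_coe.2 hgTmem)
  have hxw : x ≤ w := by
    apply (isLUB_maxBelow hG x).2
    intro h hh
    by_cases hhg : h ≤ g
    · exact le_trans hhg hgw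
    · exact hw.1 (Finset.mem_coe.2 ((hTmem h).2 (Or.inr ⟨hh, hhg⟩)))
  refine ⟨w, hgw, hxw, ?_, ?_, ?_⟩
  · intro d hd hdw
    obtain ⟨m, hm, hdm⟩ := exists_maxBelow_above (hDG hd) hdw
    rw [hmBw] at hm
    rcases (hTmem m).1 (Finset.mem_coe.1 hm) with rfl | ⟨hmM, -⟩
    · exact h3 d hd hdm
    · exact hxD d hd (le_trans hdm (maxBelow_le hmM))
  · apply nested_mono hB
    rw [hmBw]
    intro a ha
    rcases ha with haN | haT
    · exact Set.mem_insert_iff.2 (Or.inr (Or.inl haN))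
    · exact hTsubB haT
  · intro z hgz2 hxz2
    apply hw.2
    intro t ht
    rcases (hTmem t).1 (Finset.mem_coe.1 ht) with rfl | ⟨htM, -⟩
    · exact hgz2
    · exact le_trans (maxBelow_le htM) hxz2
end Building
end Aux2

section Infra
set_option linter.unusedSectionVars false
set_option linter.unusedVariables false

variable {L : Type u} [SemilatticeInf L] [Fintype L] [OrderBot L]

/-- The membership condition for the model poset. -/
def Mcond (G D : Set L) (p : Set L × L) : Prop :=
  p.1 ⊆ D ∧ (∀ d ∈ D, ¬ d ≤ p.2) ∧ IsNested G (p.1 ∪ maxBelow G p.2)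

/-- The model poset for the intermediate blowups. -/
def MT (G D : Set L) : Type u := {p : Set L × L // Mcond G D p}

noncomputable instance (G D : Set L) : PartialOrder (MT G D) :=
  inferInstanceAs (PartialOrder {p : Set L × L // Mcond G D p})

lemma MT.le_iff {G D : Set L} {p q : MT G D} :
    p ≤ q ↔ (p.val.1 ⊆ q.val.1 ∧ p.val.2 ≤ q.val.2) := by
  exact Iff.rfl

lemma Mcond_pt {G : Set L} (hG : IsBuilding G) {D : Set L} {y : L} (hy : ∀ d ∈ D, ¬ d ≤ y) :
    Mcond G D (∅, y) := by
  refine ⟨Set.empty_subset D, hy, ?_⟩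
  rw [Set.empty_union]
  exact nested_maxBelow hG y

/-- Invariant: after blowing up the elements of `D`, the state is isomorphic to `MT G D`
with the natural tracking map. -/
def InvP (G D : Set L) (S : BlowupState L) : Prop :=
  ∃ e : S.carrier ≃ MT G D,
    (∀ a b : S.carrier, (@LE.le _ S.order.toPreorder.toLE a b) ↔ e a ≤ e b) ∧
    (∀ y : L, (∀ d ∈ D, ¬ d ≤ y) → ∃ a : S.carrier, S.emb y = some a ∧ (e a).val = (∅, y)) ∧
    (∀ y : L, (∃ d ∈ D, d ≤ y) → S.emb y = none)

lemma recur_MT {G : Set L} (hG : IsBuilding G) {D : Set L} (hDG : D ⊆ G) {g : L} (hgG : g ∈ G)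
    (h3 : ∀ d ∈ D, ¬ d ≤ g)
    (hcl : ∀ h ∈ G, ∀ d, (d ∈ D ∨ d = g) → d < h → h ∈ D)
    {q : MT G D} (hgx : ¬ g ≤ q.val.2) :
    (∃ j : MT G D, IsLUB {⟨(∅, g), Mcond_pt hG h3⟩, q} j) ↔
      IsNested G (insert g (q.val.1 ∪ maxBelow G q.val.2)) := by
  constructor
  · rintro ⟨j, hj⟩
    have h1 : (⟨(∅, g), Mcond_pt hG h3⟩ : MT G D) ≤ j := hj.1 (Set.mem_insert _ _)
    have h2 : q ≤ j := hj.1 (Set.mem_insert_iff.2 (Or.inr rfl))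
    have h1' := MT.le_iff.1 h1
    have h2' := MT.le_iff.1 h2
    exact recur_fwd hG hDG hgG hcl q.2.1 q.2.2.1 q.2.2.2 j.2.1 h2'.1 h1'.2 h2'.2
      j.2.2.1 j.2.2.2
  · intro hB
    obtain ⟨w, hgw, hxw, hwD, hnw, hmin⟩ :=
      recur_bwd hG hDG hgG h3 q.2.1 q.2.2.1 hgx hB
    refine ⟨⟨(q.val.1, w), q.2.1, hwD, hnw⟩, ?_, ?_⟩
    · intro r hr
      rcases Set.mem_insert_iff.1 hr with rfl | hr'
      · exact MT.le_iff.2 ⟨Set.empty_subset _, hgw⟩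
      · rw [Set.mem_singleton_iff] at hr'
        subst hr'
        exact MT.le_iff.2 ⟨fun a ha => ha, hxw⟩
    · intro r hr
      have hr1 := MT.le_iff.1 (hr (Set.mem_insert _ _))
      have hr2 := MT.le_iff.1 (hr (Set.mem_insert_iff.2 (Or.inr rfl)))
      exact MT.le_iff.2 ⟨hr2.1, hmin r.val.2 hr1.2 hr2.2⟩

end Infra
section Step
set_option linter.unusedSectionVars false
set_option linter.unusedVariables false

variable {L : Type u} [SemilatticeInf L] [Fintype L] [OrderBot L]

lemma invP_step {G : Set L} (hG : IsBuilding G) {D : Set L} (hDG : D ⊆ G) {g : L} (hgG : g ∈ G)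
    (hgD : g ∉ D) (h3 : ∀ d ∈ D, ¬ d ≤ g)
    (hcl : ∀ h ∈ G, ∀ d, (d ∈ D ∨ d = g) → d < h → h ∈ D)
    {S : BlowupState L} (hS : InvP G D S) : InvP G (insert g D) (blowupStep S g) := by
  classical
  obtain ⟨e, he, hT1, hT2⟩ := hS
  obtain ⟨ag, hembg, hvalg⟩ := hT1 g h3
  letI := S.order
  have hstep : blowupStep S g =
      { carrier := Blowup S.carrier ag
        order := blowupPartialOrder ag
        emb := fun y =>
          match S.emb y with
          | none => none
          | some b => if h : ¬ ag ≤ b then some (Blowup.mk1 b h) else none } := by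
    unfold blowupStep
    rw [hembg]
  rw [hstep]
  set ptg : MT G D := ⟨(∅, g), Mcond_pt hG h3⟩ with hptgdef
  have heag : e ag = ptg := Subtype.ext hvalg
  have hes : ∀ p q : MT G D, p ≤ q ↔ e.symm p ≤ e.symm q := by
    intro p q
    constructor
    · intro h
      apply (he (e.symm p) (e.symm q)).2
      rwa [Equiv.apply_symm_apply, Equiv.apply_symm_apply]
    · intro h
      have := (he (e.symm p) (e.symm q)).1 h
      rwa [Equiv.apply_symm_apply, Equiv.apply_symm_apply] at this
  have hgle : ∀ a : S.carrier, (ag ≤ a) ↔ g ≤ (e a).val.2 := by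
    intro a
    rw [he ag a, heag]
    constructor
    · intro h
      exact (MT.le_iff.1 h).2
    · intro h
      exact MT.le_iff.2 ⟨Set.empty_subset _, h⟩
  -- forward membership
  have hfwd_mem : ∀ z : Blowup S.carrier ag,
      Mcond G (insert g D)
        (cond z.val.1 (insert g (e z.val.2).val.1) ((e z.val.2).val.1),
          (e z.val.2).val.2) := by
    rintro ⟨⟨b, y⟩, hy, hb⟩
    dsimp only at hy hb ⊢
    have hgxy : ¬ g ≤ (e y).val.2 := fun h => hy ((hgle y).2 h)
    have hxins : ∀ d ∈ insert g D, ¬ d ≤ (e y).val.2 := by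
      intro d hd
      rcases Set.mem_insert_iff.1 hd with rfl | hd'
      · exact hgxy
      · exact (e y).2.2.1 d hd'
    cases b with
    | false =>
      exact ⟨Set.Subset.trans (e y).2.1 (Set.subset_insert g D), hxins, (e y).2.2.2⟩
    | true =>
      obtain ⟨jc, hjc⟩ := hb rfl
      have hj2 := isLUB_image_of_iff he e.surjective hjc
      rw [Set.image_pair, heag] at hj2
      have hnested := (recur_MT hG hDG hgG h3 hcl (q := e y) hgxy).1 ⟨e jc, hj2⟩
      refine ⟨Set.insert_subset_insert (e y).2.1, hxins, ?_⟩
      show IsNested G (insert g (e y).val.1 ∪ maxBelow G (e y).val.2)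
      rw [Set.insert_union]
      exact hnested
  -- backward data
  have hbwd_q : ∀ p : MT G (insert g D), Mcond G D (p.val.1 \ {g}, p.val.2) := by
    intro p
    refine ⟨?_, fun d hd => p.2.2.1 d (Set.mem_insert_of_mem g hd), ?_⟩
    · rintro a ⟨haN, hag⟩
      rcases Set.mem_insert_iff.1 (p.2.1 haN) with rfl | h'
      · exact absurd rfl hag
      · exact h'
    · exact nested_mono p.2.2.2 (Set.union_subset_union_left _ Set.diff_subset)
  have hgxp : ∀ p : MT G (insert g D), ¬ g ≤ p.val.2 := fun p => p.2.2.1 g (Set.mem_insert g D)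
  have hbwd_notle : ∀ p : MT G (insert g D),
      ¬ ag ≤ e.symm ⟨(p.val.1 \ {g}, p.val.2), hbwd_q p⟩ := by
    intro p h
    have := (hgle _).1 h
    erw [Equiv.apply_symm_apply] at this
    exact hgxp p this
  have hbwd_lub : ∀ p : MT G (insert g D), g ∈ p.val.1 →
      ∃ j, IsLUB {ag, e.symm ⟨(p.val.1 \ {g}, p.val.2), hbwd_q p⟩} j := by
    intro p hgp
    have hnested : IsNested G (insert g ((p.val.1 \ {g}) ∪ maxBelow G p.val.2)) := by
      have heq : insert g ((p.val.1 \ {g}) ∪ maxBelow G p.val.2)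
          = p.val.1 ∪ maxBelow G p.val.2 := by
        rw [← Set.insert_union, Set.insert_diff_singleton, Set.insert_eq_self.2 hgp]
      rw [heq]
      exact p.2.2.2
    obtain ⟨j, hj⟩ := (recur_MT hG hDG hgG h3 hcl
      (q := (⟨(p.val.1 \ {g}, p.val.2), hbwd_q p⟩ : MT G D)) (hgxp p)).2 hnested
    have hsymag : e.symm (⟨(∅, g), Mcond_pt hG h3⟩ : MT G D) = ag := by
      rw [← hptgdef, ← heag, Equiv.symm_apply_apply]
    have := isLUB_image_of_iff hes e.symm.surjective hj
    erw [Set.image_pair] at this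
    rw [hsymag] at this
    exact ⟨e.symm j, this⟩
  -- the maps
  set F : Blowup S.carrier ag → MT G (insert g D) := fun z =>
    ⟨(cond z.val.1 (insert g (e z.val.2).val.1) ((e z.val.2).val.1),
      (e z.val.2).val.2), hfwd_mem z⟩ with hFdef
  set Fi : MT G (insert g D) → Blowup S.carrier ag := fun p =>
    ⟨((if g ∈ p.val.1 then true else false),
      e.symm ⟨(p.val.1 \ {g}, p.val.2), hbwd_q p⟩),
      hbwd_notle p,
      fun hbtrue => hbwd_lub p (by
        by_contra hgp
        rw [if_neg hgp] at hbtrue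
        exact Bool.noConfusion hbtrue)⟩ with hFidef
  have hgNq : ∀ y : S.carrier, g ∉ (e y).val.1 := fun y h => hgD ((e y).2.1 h)
  have hleft : ∀ z, Fi (F z) = z := by
    rintro ⟨⟨b, y⟩, hy, hb⟩
    apply Subtype.ext
    cases b with
    | false =>
      apply Prod.ext
      · show (if g ∈ (e y).val.1 then true else false) = false
        rw [if_neg (hgNq y)]
      · show e.symm ⟨((e y).val.1 \ {g}, (e y).val.2), _⟩ = y
        have harg : (⟨((e y).val.1 \ {g}, (e y).val.2), hbwd_q (F ⟨(false, y), hy, hb⟩)⟩ : MT G D) = e y := by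
          apply Subtype.ext
          apply Prod.ext
          · exact Set.diff_singleton_eq_self (hgNq y)
          · rfl
        rw [harg, Equiv.symm_apply_apply]
    | true =>
      apply Prod.ext
      · exact if_pos (Set.mem_insert g ((e y).val.1))
      · show e.symm ⟨(insert g (e y).val.1 \ {g}, (e y).val.2), _⟩ = y
        have harg : (⟨(insert g (e y).val.1 \ {g}, (e y).val.2), hbwd_q (F ⟨(true, y), hy, hb⟩)⟩ : MT G D) = e y := by
          apply Subtype.ext
          apply Prod.ext
          · exact Set.insert_diff_self_of_notMem (hgNq y)
          · rfl
        rw [harg, Equiv.symm_apply_apply]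
  have hright : ∀ p, F (Fi p) = p := by
    intro p
    have h1 : e (e.symm (⟨(p.val.1 \ {g}, p.val.2), hbwd_q p⟩ : MT G D))
        = ⟨(p.val.1 \ {g}, p.val.2), hbwd_q p⟩ := Equiv.apply_symm_apply e _
    apply Subtype.ext
    apply Prod.ext
    · show cond (if g ∈ p.val.1 then true else false)
        (insert g ((e (e.symm ⟨(p.val.1 \ {g}, p.val.2), hbwd_q p⟩)).val.1))
        ((e (e.symm ⟨(p.val.1 \ {g}, p.val.2), hbwd_q p⟩)).val.1) = p.val.1
      rw [h1]
      by_cases hgp : g ∈ p.val.1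
      · rw [if_pos hgp]
        show insert g (p.val.1 \ {g}) = p.val.1
        rw [Set.insert_diff_singleton, Set.insert_eq_self.2 hgp]
      · rw [if_neg hgp]
        show p.val.1 \ {g} = p.val.1
        exact Set.diff_singleton_eq_self hgp
    · show (e (e.symm ⟨(p.val.1 \ {g}, p.val.2), hbwd_q p⟩)).val.2 = p.val.2
      rw [h1]
  have hins_iff : ∀ (y y' : S.carrier),
      ((e y).val.1 ⊆ insert g (e y').val.1) ↔ (e y).val.1 ⊆ (e y').val.1 := by
    intro y y'
    constructor
    · intro h a ha
      rcases Set.mem_insert_iff.1 (h ha) with rfl | h'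
      · exact absurd ha (hgNq y)
      · exact h'
    · intro h
      exact Set.Subset.trans h (Set.subset_insert g _)
  have hins_iff2 : ∀ (y y' : S.carrier),
      (insert g (e y).val.1 ⊆ insert g (e y').val.1) ↔ (e y).val.1 ⊆ (e y').val.1 := by
    intro y y'
    constructor
    · intro h a ha
      rcases Set.mem_insert_iff.1 (h (Set.mem_insert_of_mem g ha)) with rfl | h'
      · exact absurd ha (hgNq y)
      · exact h'
    · intro h
      exact Set.insert_subset_insert h
  have hEle : ∀ z z' : Blowup S.carrier ag, z ≤ z' ↔ F z ≤ F z' := by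
    rintro ⟨⟨b, y⟩, hy, hb⟩ ⟨⟨b', y'⟩, hy', hb'⟩
    have hlhs : (⟨(b, y), hy, hb⟩ : Blowup S.carrier ag) ≤ ⟨(b', y'), hy', hb'⟩
        ↔ (b ≤ b' ∧ y ≤ y') := by
      rw [← Subtype.coe_le_coe, Prod.le_def]
    refine hlhs.trans ?_
    rw [MT.le_iff]
    have hyy' : ((e y).val.1 ⊆ (e y').val.1 ∧ (e y).val.2 ≤ (e y').val.2) ↔ y ≤ y' :=
      (MT.le_iff.symm).trans (he y y').symm
    cases b with
    | false =>
      cases b' with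
      | false =>
        constructor
        · intro h
          have := hyy'.2 h.2
          exact ⟨this.1, this.2⟩
        · intro h
          exact ⟨Bool.false_le _, hyy'.1 ⟨h.1, h.2⟩⟩
      | true =>
        show (false ≤ true ∧ y ≤ y') ↔ ((e y).val.1 ⊆ insert g (e y').val.1 ∧ (e y).val.2 ≤ (e y').val.2)
        rw [hins_iff]
        constructor
        · intro h
          have := hyy'.2 h.2
          exact ⟨this.1, this.2⟩
        · intro h
          exact ⟨Bool.false_le _, hyy'.1 ⟨h.1, h.2⟩⟩
    | true =>
      cases b' with
      | false =>
        show (true ≤ false ∧ y ≤ y') ↔ (insert g (e y).val.1 ⊆ (e y').val.1 ∧ (e y).val.2 ≤ (e y').val.2)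
        constructor
        · rintro ⟨h1, -⟩
          exact absurd h1 (by decide)
        · rintro ⟨h1, -⟩
          exact absurd ((e y').2.1 (h1 (Set.mem_insert g _))) hgD
      | true =>
        show (true ≤ true ∧ y ≤ y') ↔ (insert g (e y).val.1 ⊆ insert g (e y').val.1 ∧ (e y).val.2 ≤ (e y').val.2)
        rw [hins_iff2]
        constructor
        · intro h
          have := hyy'.2 h.2
          exact ⟨this.1, this.2⟩
        · intro h
          exact ⟨le_refl true, hyy'.1 ⟨h.1, h.2⟩⟩
  refine ⟨⟨F, Fi, hleft, hright⟩, ?_, ?_, ?_⟩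
  · intro a b
    exact hEle a b
  · -- tracking: surviving elements
    intro y hy'
    have hyD : ∀ d ∈ D, ¬ d ≤ y := fun d hd => hy' d (Set.mem_insert_of_mem g hd)
    obtain ⟨ay, hSy, hvaly⟩ := hT1 y hyD
    have hnotle : ¬ ag ≤ ay := by
      intro hle
      apply hy' g (Set.mem_insert g D)
      have := (hgle ay).1 hle
      rwa [congrArg Prod.snd hvaly] at this
    refine ⟨Blowup.mk1 ay hnotle, ?_, ?_⟩
    · show (match S.emb y with
        | none => none
        | some b => if h : ¬ ag ≤ b then some (Blowup.mk1 b h) else none) = some (Blowup.mk1 ay hnotle)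
      rw [hSy]
      show (if h : ¬ ag ≤ ay then some (Blowup.mk1 ay h) else none) = some (Blowup.mk1 ay hnotle)
      rw [dif_pos hnotle]
    · show ((e ay).val.1, (e ay).val.2) = ((∅ : Set L), y)
      rw [Prod.mk.eta, hvaly]
  · -- tracking: dead elements
    rintro y ⟨d, hd, hdy⟩
    show (match S.emb y with
      | none => none
      | some b => if h : ¬ ag ≤ b then some (Blowup.mk1 b h) else none) = none
    rcases Set.mem_insert_iff.1 hd with rfl | hdD
    · by_cases hyD : ∀ d' ∈ D, ¬ d' ≤ y
      · obtain ⟨ay, hSy, hvaly⟩ := hT1 y hyD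
        have hle : ag ≤ ay := by
          apply (hgle ay).2
          rw [congrArg Prod.snd hvaly]
          exact hdy
        rw [hSy]
        show (if h : ¬ ag ≤ ay then some (Blowup.mk1 ay h) else none) = none
        rw [dif_neg (not_not_intro hle)]
      · push_neg at hyD
        obtain ⟨d', hd', hd'y⟩ := hyD
        rw [hT2 y ⟨d', hd', hd'y⟩]
    · rw [hT2 y ⟨d, hdD, hdy⟩]

end Step
section Final
set_option linter.unusedSectionVars false
set_option linter.unusedVariables false

variable {L : Type u} [SemilatticeInf L] [Fintype L] [OrderBot L]

lemma invP_init {G : Set L} (hG : IsBuilding G) : InvP G ∅ (initState L) := by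
  refine ⟨⟨fun y => ⟨(∅, y), Mcond_pt hG (fun d hd => absurd hd (Set.notMem_empty d))⟩,
    fun p => p.val.2, ?_, ?_⟩, ?_, ?_, ?_⟩
  · intro y
    rfl
  · intro p
    apply Subtype.ext
    apply Prod.ext
    · exact (Set.subset_empty_iff.1 p.2.1).symm
    · rfl
  · intro a b
    constructor
    · intro h
      exact MT.le_iff.2 ⟨fun t ht => ht, h⟩
    · intro h
      exact (MT.le_iff.1 h).2
  · intro y hy
    exact ⟨y, rfl, rfl⟩
  · rintro y ⟨d, hd, -⟩
    exact absurd hd (Set.notMem_empty d)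

lemma invP_fold {G : Set L} (hG : IsBuilding G) :
    ∀ (rest done : List L) (S : BlowupState L),
      (done ++ rest).Nodup → {a : L | a ∈ done ++ rest} = G →
      (done ++ rest).Pairwise (fun a b => ¬ a < b) →
      InvP G {a : L | a ∈ done} S →
      InvP G {a : L | a ∈ done ++ rest} (List.foldl blowupStep S rest) := by
  intro rest
  induction rest with
  | nil =>
    intro done S hnd hlG hord hS
    simpa using hS
  | cons g rest' ih =>
    intro done S hnd hlG hord hS
    have hgG : g ∈ G := by
      rw [← hlG]
      exact List.mem_append.2 (Or.inr List.mem_cons_self)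
    have hDsub : {a : L | a ∈ done} ⊆ G := by
      rw [← hlG]
      intro a ha
      exact List.mem_append_left _ ha
    have hgD : g ∉ {a : L | a ∈ done} := by
      intro h
      exact (List.nodup_append.1 hnd).2.2 g h g List.mem_cons_self rfl
    have hpair : ∀ d ∈ done, ¬ d < g := by
      intro d hd
      exact (List.pairwise_append.1 hord).2.2 d hd g List.mem_cons_self
    have h3 : ∀ d ∈ {a : L | a ∈ done}, ¬ d ≤ g := by
      intro d hd hle
      rcases lt_or_eq_of_le hle with hlt | rfl
      · exact hpair d hd hlt
      · exact hgD hd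
    have hcl : ∀ h ∈ G, ∀ d, (d ∈ {a : L | a ∈ done} ∨ d = g) → d < h →
        h ∈ {a : L | a ∈ done} := by
      intro h hh d hd hdh
      rw [← hlG] at hh
      rcases List.mem_append.1 hh with h1 | h1
      · exact h1
      · rcases List.mem_cons.1 h1 with rfl | h2
        · rcases hd with hd | rfl
          · exact absurd hdh (hpair d hd)
          · exact absurd hdh (lt_irrefl d)
        · rcases hd with hd | rfl
          · exact absurd hdh
              ((List.pairwise_append.1 hord).2.2 d hd h (List.mem_cons_of_mem g h2))
          · exact absurd hdh
              ((List.pairwise_cons.1 (List.pairwise_append.1 hord).2.1).1 h h2)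
    have hstep := invP_step hG hDsub hgG hgD h3 hcl hS
    have hset : insert g {a : L | a ∈ done} = {a : L | a ∈ done ++ [g]} := by
      ext a
      simp [or_comm]
    rw [hset] at hstep
    have hre : done ++ g :: rest' = (done ++ [g]) ++ rest' := by simp
    have happly := ih (done ++ [g]) (blowupStep S g)
      (by rw [← hre]; exact hnd) (by rw [← hre]; exact hlG) (by rw [← hre]; exact hord) hstep
    rw [hre]
    exact happly

lemma MT_final {G : Set L} (hG : IsBuilding G) :
    ∃ e2 : MT G G ≃ {N : Set L // IsNested G N}, ∀ p q : MT G G, p ≤ q ↔ e2 p ≤ e2 q := by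
  have hbot : ∀ p : MT G G, p.val.2 = ⊥ := fun p => eq_bot_of_no_maxBelow hG p.2.2.1
  have hnest : ∀ p : MT G G, IsNested G p.val.1 := by
    intro p
    have h := p.2.2.2
    rw [hbot p, maxBelow_bot hG.1, Set.union_empty] at h
    exact h
  refine ⟨⟨fun p => ⟨p.val.1, hnest p⟩,
    fun n => ⟨(n.val, ⊥), n.2.1, fun d hd hle => hG.1 d hd (le_bot_iff.1 hle), by
      rw [maxBelow_bot hG.1, Set.union_empty]; exact n.2⟩, ?_, ?_⟩, ?_⟩
  · intro p
    apply Subtype.ext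
    apply Prod.ext
    · rfl
    · exact (hbot p).symm
  · intro n
    rfl
  · intro p q
    rw [MT.le_iff]
    constructor
    · intro h
      exact h.1
    · intro h
      refine ⟨h, ?_⟩
      rw [hbot p]
      exact bot_le

end Final

/-- blowing up all elements of a building set `G`, in an order such that
`Gᵢ > Gⱼ` implies `i < j`, yields a poset isomorphic to the face poset of the nested set
complex, i.e. to the nested subsets of `G` ordered by inclusion. -/
theorem iterated_blowup_eq_nested_set_complex {L : Type u} [SemilatticeInf L] [Fintype L]
    [OrderBot L] (G : Set L) (hG : IsBuilding G) (l : List L)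
    (hnd : l.Nodup) (hlG : {a : L | a ∈ l} = G)
    (hord : l.Pairwise fun a b => ¬ a < b) :
    ∃ e : (iterBlowup L l).carrier ≃ {N : Set L // IsNested G N},
      ∀ a b : (iterBlowup L l).carrier,
        (@LE.le _ (iterBlowup L l).order.toPreorder.toLE a b) ↔ e a ≤ e b := by
  classical
  have h0 : InvP G {a : L | a ∈ ([] : List L)} (initState L) := by
    have hh : {a : L | a ∈ ([] : List L)} = (∅ : Set L) := by simp
    rw [hh]
    exact invP_init hG
  have h1 := invP_fold hG l [] (initState L) (by simpa using hnd) (by simpa using hlG)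
    (by simpa using hord) h0
  have hl : {a : L | a ∈ ([] : List L) ++ l} = G := by simpa using hlG
  rw [hl] at h1
  obtain ⟨e, he, -, -⟩ := h1
  obtain ⟨e2, he2⟩ := MT_final hG
  refine ⟨Equiv.trans e e2, ?_⟩
  intro a b
  exact (he a b).trans (he2 (e a) (e b))
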